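/- Let α ∈ (0,1/2) be irrational. Then for every k ≥ 1, the parity vector (ε_k(0), ε_k(1)) belongs to {(0,1), (1,0), (1,1)}, and moreover: if (ε_k(0),ε_k(1)) = (0,1) then s_k(0) = 1; if (ε_k(0),ε_k(1)) = (1,0) then s_k(1) = 1; and if (ε_k(0),ε_k(1)) = (1,1) then s_k(0) − s_k(1) = 1. -/

import Mathlib

/-- `φ(x) = 1` if the fractional part of `x` lies in `[0,1/2)`, and `−1` otherwise. -/
noncomputable def phi (x : ℝ) : ℤ := if Int.fract x < 1/2 then 1 else -1

/-- `β_k`: the orbit of `β` under the minus (modified) continued fraction algorithm. -/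
noncomputable def betaSeq (β : ℝ) : ℕ → ℝ
  | 0 => β
  | k+1 => (⌈1 / betaSeq β k⌉ : ℝ) - 1 / betaSeq β k

/-- The minus continued fraction digits: `nDigit β k = n_{k+1} = ⌈1/β_k⌉`. -/
noncomputable def nDigit (β : ℝ) (k : ℕ) : ℤ := ⌈1 / betaSeq β k⌉

/-- Block lengths `(ℓ_k(0), ℓ_k(1))`. -/
noncomputable def ell (β : ℝ) : ℕ → ℕ × ℕ
  | 0 => (1, 1)
  | k+1 => ((nDigit β k - 1).toNat * (ell β k).1 + (ell β k).2,
            (nDigit β k - 2).toNat * (ell β k).1 + (ell β k).2)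

/-- The substitution words `(b_k(0), b_k(1))` over `{0,1}`. -/
noncomputable def bword (β : ℝ) : ℕ → List ℕ × List ℕ
  | 0 => ([0], [1])
  | k+1 =>
      ((List.replicate (nDigit β k - 1).toNat (bword β k).1).flatten ++ (bword β k).2,
       (List.replicate (nDigit β k - 2).toNat (bword β k).1).flatten ++ (bword β k).2)

/-- Parities `(ε_k(0), ε_k(1))`: the sums of the letters of `b_k(0)`, `b_k(1)` mod 2. -/
noncomputable def eps (β : ℝ) (k : ℕ) : ℕ × ℕ :=
  ((bword β k).1.sum % 2, (bword β k).2.sum % 2)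

/-- Position `s_k(i) = ∑_{j=0}^{ℓ−1} φ({jα})` where `ℓ = ℓ_k(i)`. -/
noncomputable def sPos (α : ℝ) (ℓ : ℕ) : ℤ :=
  ∑ j ∈ Finset.range ℓ, phi (Int.fract ((j : ℝ) * α))

namespace PPL

/-- parity sign -/
def E (m : ℤ) : ℤ := if Even m then 1 else -1

lemma E_add (a b : ℤ) : E (a + b) = E a * E b := by
  unfold E
  by_cases ha : Even a <;> by_cases hb : Even b <;>
    simp [ha, hb, Int.even_add]

lemma E_mul (m p : ℤ) : E (m * p) = if Even m ∨ Even p then 1 else -1 := by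
  simp [E, Int.even_mul]

noncomputable def U (β : ℝ) (ℓ : ℕ) : ℤ := ∑ j ∈ Finset.range ℓ, E ⌊(j : ℝ) * β⌋

lemma U_one (β : ℝ) : U β 1 = 1 := by simp [U, E]

lemma sum_E_even {p : ℤ} (hp : Even p) (m : ℕ) :
    ∑ t ∈ Finset.range m, E ((t:ℤ) * p) = m := by
  have : ∀ t ∈ Finset.range m, E ((t:ℤ) * p) = 1 := by
    intro t _; rw [E_mul]; simp [hp]
  rw [Finset.sum_congr rfl this]; simp

lemma sum_E_odd {p : ℤ} (hp : ¬ Even p) (m : ℕ) :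
    ∑ t ∈ Finset.range m, E ((t:ℤ) * p) = if Even m then 0 else 1 := by
  have : ∀ t ∈ Finset.range m, E ((t:ℤ) * p) = (-1 : ℤ)^t := by
    intro t _; rw [E_mul]
    by_cases ht : Even t
    · simp [ht, Int.even_coe_nat, ht.neg_one_pow]
    · have : ¬ Even ((t:ℤ)) := by simpa [Int.even_coe_nat] using ht
      simp [this, hp, (Nat.not_even_iff_odd.mp ht).neg_one_pow]
  rw [Finset.sum_congr rfl this, neg_one_geom_sum]

lemma E_nat_mul (m p : ℕ) : E ((m:ℤ) * p) = if Even p then 1 else if Even m then 1 else -1 := by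
  rw [E_mul]
  by_cases hp : Even p <;> by_cases hm : Even m <;>
    simp [hp, hm, Int.even_coe_nat]

/-- the key translation: `phi({jα}) = E(⌊j·2α⌋)`. -/
lemma phi_eq (α : ℝ) (j : ℕ) : phi (Int.fract ((j : ℝ) * α)) = E ⌊(j : ℝ) * (2 * α)⌋ := by
  set f := Int.fract ((j : ℝ) * α) with hf
  have hf0 : 0 ≤ f := Int.fract_nonneg _
  have hf1 : f < 1 := Int.fract_lt_one _
  have hx : (j : ℝ) * (2 * α) = ((2 * ⌊(j:ℝ)*α⌋ : ℤ) : ℝ) + 2 * f := by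
    have h1 : ((⌊(j:ℝ)*α⌋ : ℝ)) + f = (j:ℝ)*α := by
      rw [hf]; exact Int.floor_add_fract _
    push_cast
    linarith
  have hphi : phi f = if f < 1/2 then 1 else -1 := by
    simp [phi, Int.fract_fract, hf]
  rcases lt_or_ge f (1/2) with h | h
  · have hfl : ⌊(j : ℝ) * (2 * α)⌋ = 2 * ⌊(j:ℝ)*α⌋ := by
      rw [hx, Int.floor_intCast_add]
      have h2 : ⌊2 * f⌋ = 0 := by
        rw [Int.floor_eq_zero_iff]
        exact ⟨by linarith, by linarith⟩
      omega
    rw [hphi, hfl]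
    have hev : Even (2 * ⌊(j:ℝ)*α⌋) := even_two_mul _
    simp only [E, if_pos h, if_pos hev]
  · have hfl : ⌊(j : ℝ) * (2 * α)⌋ = 2 * ⌊(j:ℝ)*α⌋ + 1 := by
      rw [hx, Int.floor_intCast_add]
      have h2 : ⌊2 * f⌋ = 1 := by
        rw [Int.floor_eq_iff]
        push_cast
        constructor <;> linarith
      omega
    rw [hphi, hfl]
    have hodd : ¬ Even (2 * ⌊(j:ℝ)*α⌋ + 1) := by simp [Int.even_add_one, Int.even_mul]
    simp only [E, if_neg (not_lt.mpr h), if_neg hodd]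


variable {β : ℝ}

lemma beta_props (h0 : 0 < β) (h1 : β < 1) (hirr : Irrational β) :
    ∀ k, 0 < betaSeq β k ∧ betaSeq β k < 1 ∧ Irrational (betaSeq β k) := by
  intro k
  induction k with
  | zero => exact ⟨h0, h1, hirr⟩
  | succ k ih =>
    obtain ⟨hp, hl, hi⟩ := ih
    have hy : Irrational (1 / betaSeq β k) := by
      rw [one_div]; exact hi.inv
    have hne : (1 / betaSeq β k) ≠ ((⌈1 / betaSeq β k⌉ : ℤ) : ℝ) := hy.ne_int _
    have h2 : (1 / betaSeq β k) ≤ ((⌈1 / betaSeq β k⌉ : ℤ) : ℝ) := Int.le_ceil _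
    have h3 : ((⌈1 / betaSeq β k⌉ : ℤ) : ℝ) < 1 / betaSeq β k + 1 := Int.ceil_lt_add_one _
    have h4 := lt_of_le_of_ne h2 hne
    simp only [betaSeq]
    exact ⟨by linarith, by linarith, hy.intCast_sub _⟩

lemma nd2 (h0 : 0 < β) (h1 : β < 1) (hirr : Irrational β) (k : ℕ) : 2 ≤ nDigit β k := by
  obtain ⟨hp, hl, _⟩ := beta_props h0 h1 hirr k
  have hy1 : (1:ℝ) < 1 / betaSeq β k := by
    rw [lt_div_iff₀ hp]; linarith
  have := Int.lt_ceil.mpr (show ((1:ℤ):ℝ) < 1 / betaSeq β k by exact_mod_cast hy1)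
  unfold nDigit; omega

noncomputable def DD (β : ℝ) (k : ℕ) : ℝ := ∏ i ∈ Finset.range k, betaSeq β i

lemma DD_zero : DD β 0 = 1 := by simp [DD]
lemma DD_succ (k : ℕ) : DD β (k+1) = DD β k * betaSeq β k := Finset.prod_range_succ _ _

lemma DD_pos (h0 : 0 < β) (h1 : β < 1) (hirr : Irrational β) (k : ℕ) : 0 < DD β k :=
  Finset.prod_pos fun i _ => (beta_props h0 h1 hirr i).1

lemma DD_le_one (h0 : 0 < β) (h1 : β < 1) (hirr : Irrational β) (k : ℕ) : DD β k ≤ 1 := by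
  induction k with
  | zero => rw [DD_zero]
  | succ k ih =>
    rw [DD_succ]
    obtain ⟨hp, hl, _⟩ := beta_props h0 h1 hirr k
    nlinarith [DD_pos h0 h1 hirr k]

lemma DD_antitone (h0 : 0 < β) (h1 : β < 1) (hirr : Irrational β) (k : ℕ) :
    DD β (k+1) ≤ DD β k := by
  rw [DD_succ]
  obtain ⟨hp, hl, _⟩ := beta_props h0 h1 hirr k
  nlinarith [DD_pos h0 h1 hirr k]

lemma ell_succ (k : ℕ) : ell β (k+1) =
    ((nDigit β k - 1).toNat * (ell β k).1 + (ell β k).2,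
     (nDigit β k - 2).toNat * (ell β k).1 + (ell β k).2) := rfl

lemma bsum1 (k : ℕ) : (bword β (k+1)).1.sum
    = (nDigit β k - 1).toNat * (bword β k).1.sum + (bword β k).2.sum := by
  show ((List.replicate (nDigit β k - 1).toNat (bword β k).1).flatten ++ (bword β k).2).sum = _
  rw [List.sum_append]
  congr 1
  rw [List.sum_flatten, List.map_replicate, List.sum_replicate, smul_eq_mul]

lemma bsum2 (k : ℕ) : (bword β (k+1)).2.sum
    = (nDigit β k - 2).toNat * (bword β k).1.sum + (bword β k).2.sum := by
  show ((List.replicate (nDigit β k - 2).toNat (bword β k).1).flatten ++ (bword β k).2).sum = _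
  rw [List.sum_append]
  congr 1
  rw [List.sum_flatten, List.map_replicate, List.sum_replicate, smul_eq_mul]

lemma hD2gen (h0 : 0 < β) (h1 : β < 1) (hirr : Irrational β) (k : ℕ) :
    DD β (k+2) = ((nDigit β k : ℤ):ℝ) * DD β (k+1) - DD β k := by
  obtain ⟨hp, hl, _⟩ := beta_props h0 h1 hirr k
  have hb : betaSeq β (k+1) = ((nDigit β k : ℤ):ℝ) - 1 / betaSeq β k := by
    simp only [betaSeq, nDigit]
  rw [show k+2 = (k+1)+1 from rfl, DD_succ, DD_succ, hb]
  field_simp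

set_option maxHeartbeats 1000000 in
lemma key_step (β : ℝ) (Dk D1 D2 : ℝ) (q r p s N1 N2 : ℕ) (n : ℝ)
    (hDk : 0 < Dk) (hDk1 : Dk ≤ 1) (hD1 : 0 < D1) (hDle : D1 ≤ Dk)
    (hN1r : (N1:ℝ) = n - 1) (hN2r : (N2:ℝ) = n - 2) (hN12 : N1 = N2 + 1)
    (hkey : (n - 1) * D1 < Dk) (hD2 : D2 = n * D1 - Dk)
    (hr0 : 0 < r) (hrq : r ≤ q)
    (hQ : (q:ℝ)*β - p = D1) (hR : (r:ℝ)*β - s = D1 - Dk)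
    (hDet : (s:ℤ)*q - (p:ℤ)*r = 1)
    (hA : ∀ j : ℕ, 1 ≤ j → j < q →
      Dk ≤ Int.fract ((j:ℝ) * β) ∧ Int.fract ((j:ℝ) * β) ≤ 1 - Dk + D1)
    (hB : ∀ j : ℕ, j < r → Int.fract ((j:ℝ) * β) ≤ 1 - Dk)
    (hu0 : Even p → U β q = 1)
    (hv0 : ¬ Even p → Even s → U β r = 1)
    (huv0 : ¬ Even p → ¬ Even s → U β q - U β r = 1) :
    (0 < N2*q + r) ∧ (N2*q + r ≤ N1*q + r) ∧
    (((N1*q + r : ℕ):ℝ)*β - ((N1*p + s : ℕ):ℕ) = D2) ∧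
    (((N2*q + r : ℕ):ℝ)*β - ((N2*p + s : ℕ):ℕ) = D2 - D1) ∧
    (((N2*p + s : ℕ):ℤ)*(N1*q + r : ℕ) - ((N1*p + s : ℕ):ℤ)*(N2*q + r : ℕ) = 1) ∧
    (∀ j : ℕ, 1 ≤ j → j < N1*q + r →
      D1 ≤ Int.fract ((j:ℝ) * β) ∧ Int.fract ((j:ℝ) * β) ≤ 1 - D1 + D2) ∧
    (∀ j : ℕ, j < N2*q + r → Int.fract ((j:ℝ) * β) ≤ 1 - D1) ∧
    (Even (N1*p + s) → U β (N1*q + r) = 1) ∧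
    (¬ Even (N1*p + s) → Even (N2*p + s) → U β (N2*q + r) = 1) ∧
    (¬ Even (N1*p + s) → ¬ Even (N2*p + s) → U β (N1*q + r) - U β (N2*q + r) = 1) := by
  have hq0 : 0 < q := lt_of_lt_of_le hr0 hrq
  have hN1pos : 1 ≤ N1 := by omega
  -- uniform upper bound on fract over range q
  have hA' : ∀ i : ℕ, i < q → Int.fract ((i:ℝ)*β) ≤ 1 - Dk + D1 := by
    intro i hi
    rcases Nat.eq_zero_or_pos i with h | h
    · subst h; simp only [Nat.cast_zero, zero_mul, Int.fract_zero]; linarith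
    · exact (hA i h hi).2
  -- the key decomposition fact
  have hkey2 : ∀ t i : ℕ, ((t + 1 ≤ N1 ∧ i < q) ∨ (t = N1 ∧ i < r)) →
      Int.fract (((t*q+i : ℕ):ℝ)*β) = Int.fract ((i:ℝ)*β) + t * D1 ∧
      ⌊((t*q+i : ℕ):ℝ)*β⌋ = t * (p:ℤ) + ⌊(i:ℝ)*β⌋ := by
    intro t i hti
    have hlt1 : Int.fract ((i:ℝ)*β) + t * D1 < 1 := by
      rcases hti with ⟨ht, hi⟩ | ⟨ht, hi⟩
      · have h1 := hA' i hi
        have h2 : (t:ℝ) + 1 ≤ (N1:ℝ) := by exact_mod_cast ht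
        nlinarith
      · have h1 := hB i hi
        have h2 : (t:ℝ) = (N1:ℝ) := by exact_mod_cast ht
        nlinarith
    have hge : 0 ≤ Int.fract ((i:ℝ)*β) + t * D1 := by
      have := Int.fract_nonneg ((i:ℝ)*β)
      have ht0 : (0:ℝ) ≤ (t:ℝ) := Nat.cast_nonneg t
      nlinarith
    have hfl : ((⌊(i:ℝ)*β⌋:ℝ)) + Int.fract ((i:ℝ)*β) = (i:ℝ)*β := Int.floor_add_fract _
    have hx : ((t*q+i : ℕ):ℝ)*β
        = (((t:ℤ) * (p:ℤ) + ⌊(i:ℝ)*β⌋ : ℤ):ℝ) + (Int.fract ((i:ℝ)*β) + t * D1) := by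
      push_cast
      linear_combination (t:ℝ) * hQ - hfl
    constructor
    · rw [hx, Int.fract_intCast_add, Int.fract_eq_self.mpr ⟨hge, hlt1⟩]
    · rw [hx, Int.floor_intCast_add]
      have h0 : ⌊Int.fract ((i:ℝ)*β) + t * D1⌋ = 0 :=
        Int.floor_eq_zero_iff.mpr (Set.mem_Ico.mpr ⟨hge, hlt1⟩)
      omega
  -- generic decomposition of indices
  have hdec : ∀ M j : ℕ, j < M*q + r → ∃ t i : ℕ, j = t*q + i ∧
      ((t + 1 ≤ M ∧ i < q) ∨ (t = M ∧ i < r)) := by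
    intro M j hj
    by_cases h : j < M * q
    · refine ⟨j / q, j % q, (Nat.div_add_mod' j q).symm, Or.inl ⟨?_, Nat.mod_lt _ hq0⟩⟩
      have := (Nat.div_lt_iff_lt_mul hq0).mpr (by omega : j < M * q)
      omega
    · exact ⟨M, j - M*q, by omega, Or.inr ⟨rfl, by omega⟩⟩
  -- block sums
  have hblocksum : ∀ m : ℕ, m ≤ N1 →
      ∑ j ∈ Finset.range (m*q), E ⌊(j:ℝ)*β⌋ = (∑ t ∈ Finset.range m, E ((t:ℤ)*(p:ℤ))) * U β q := by
    intro m
    induction m with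
    | zero => simp
    | succ m ihm =>
      intro hm
      have hm' : m ≤ N1 := by omega
      have hsplit : (m+1)*q = m*q + q := by ring
      rw [hsplit, Finset.sum_range_add, ihm hm', Finset.sum_range_succ]
      have hterm : ∀ i ∈ Finset.range q,
          E ⌊((m*q+i : ℕ):ℝ)*β⌋ = E ((m:ℤ)*(p:ℤ)) * E ⌊(i:ℝ)*β⌋ := by
        intro i hi
        rw [(hkey2 m i (Or.inl ⟨by omega, Finset.mem_range.mp hi⟩)).2, E_add]
      rw [Finset.sum_congr rfl hterm, ← Finset.mul_sum]
      simp only [U]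
      ring
  have hUq : U β (N1*q + r) = (∑ t ∈ Finset.range N1, E ((t:ℤ)*(p:ℤ))) * U β q
      + E ((N1:ℤ)*(p:ℤ)) * U β r := by
    simp only [U]
    rw [Finset.sum_range_add, hblocksum N1 le_rfl]
    congr 1
    have hterm : ∀ i ∈ Finset.range r,
        E ⌊((N1*q+i : ℕ):ℝ)*β⌋ = E ((N1:ℤ)*(p:ℤ)) * E ⌊(i:ℝ)*β⌋ := by
      intro i hi
      rw [(hkey2 N1 i (Or.inr ⟨rfl, Finset.mem_range.mp hi⟩)).2, E_add]
    rw [Finset.sum_congr rfl hterm, ← Finset.mul_sum]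
  have hUr : U β (N2*q + r) = (∑ t ∈ Finset.range N2, E ((t:ℤ)*(p:ℤ))) * U β q
      + E ((N2:ℤ)*(p:ℤ)) * U β r := by
    simp only [U]
    rw [Finset.sum_range_add, hblocksum N2 (by omega)]
    congr 1
    have hterm : ∀ i ∈ Finset.range r,
        E ⌊((N2*q+i : ℕ):ℝ)*β⌋ = E ((N2:ℤ)*(p:ℤ)) * E ⌊(i:ℝ)*β⌋ := by
      intro i hi
      rw [(hkey2 N2 i (Or.inl ⟨by omega, lt_of_lt_of_le (Finset.mem_range.mp hi) hrq⟩)).2, E_add]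
    rw [Finset.sum_congr rfl hterm, ← Finset.mul_sum]
  refine ⟨by omega, ?_, ?_, ?_, ?_, ?_, ?_, ?_⟩
  · have := Nat.mul_le_mul_right q (show N2 ≤ N1 by omega)
    omega
  · rw [hD2]; push_cast
    linear_combination (N1:ℝ)*hQ + hR + D1*hN1r
  · rw [hD2]; push_cast
    linear_combination (N2:ℝ)*hQ + hR + D1*hN2r
  · have hc : (N1:ℤ) = (N2:ℤ) + 1 := by exact_mod_cast hN12
    push_cast
    rw [hc]
    linear_combination hDet
  · -- new A invariant
    intro j hj1 hj2
    obtain ⟨t, i, rfl, hcase⟩ := hdec N1 j hj2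
    have hf := (hkey2 t i hcase).1
    rw [hf]
    have hfr0 := Int.fract_nonneg ((i:ℝ)*β)
    constructor
    · rcases Nat.eq_zero_or_pos t with rfl | ht1
      · have hiq : i < q := by
          rcases hcase with ⟨_, hiq⟩ | ⟨ht, _⟩
          · exact hiq
          · omega
        have hi1 : 1 ≤ i := by omega
        have := (hA i hi1 hiq).1
        simp only [Nat.cast_zero, zero_mul, add_zero]
        linarith
      · have ht1' : (1:ℝ) ≤ (t:ℝ) := by exact_mod_cast ht1
        nlinarith
    · rcases hcase with ⟨ht, hiq⟩ | ⟨ht, hir⟩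
      · have h1 := hA' i hiq
        have h2 : (t:ℝ) + 1 ≤ (N1:ℝ) := by exact_mod_cast ht
        nlinarith
      · have h1 := hB i hir
        have h2 : (t:ℝ) = (N1:ℝ) := by exact_mod_cast ht
        nlinarith
  · -- new B invariant
    intro j hj
    obtain ⟨t, i, rfl, hcase⟩ := hdec N2 j hj
    have hcase' : (t + 1 ≤ N1 ∧ i < q) ∨ (t = N1 ∧ i < r) := by
      rcases hcase with ⟨ht, hiq⟩ | ⟨ht, hir⟩
      · exact Or.inl ⟨by omega, hiq⟩
      · exact Or.inl ⟨by omega, lt_of_lt_of_le hir hrq⟩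
    have hf := (hkey2 t i hcase').1
    rw [hf]
    have hfr0 := Int.fract_nonneg ((i:ℝ)*β)
    rcases hcase with ⟨ht, hiq⟩ | ⟨ht, hir⟩
    · have h1 := hA' i hiq
      have h2 : (t:ℝ) + 1 ≤ (N2:ℝ) := by exact_mod_cast ht
      nlinarith
    · have h1 := hB i hir
      have h2 : (t:ℝ) = (N2:ℝ) := by exact_mod_cast ht
      nlinarith
  · -- parity endgame
    have hnotboth : ¬ (Even p ∧ Even s) := by
      rintro ⟨hp, hs⟩
      have hp2 : Even (p:ℤ) := by exact_mod_cast hp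
      have hs2 : Even (s:ℤ) := by exact_mod_cast hs
      have h1 : Even ((s:ℤ)*q - (p:ℤ)*r) := (hs2.mul_right _).sub (hp2.mul_right _)
      rw [hDet] at h1
      norm_num at h1
    by_cases hp : Even p
    · have hs : ¬ Even s := fun h => hnotboth ⟨hp, h⟩
      have hpz : Even (p:ℤ) := by exact_mod_cast hp
      rw [sum_E_even hpz] at hUq hUr
      have hE1 : E ((N1:ℤ)*(p:ℤ)) = 1 := by rw [E_mul]; simp [hpz]
      have hE2 : E ((N2:ℤ)*(p:ℤ)) = 1 := by rw [E_mul]; simp [hpz]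
      rw [hE1, one_mul] at hUq
      rw [hE2, one_mul] at hUr
      have hu := hu0 hp
      have h1 : ¬ Even (N1*p + s) := by
        simp only [Nat.even_add, Nat.even_mul]; tauto
      have h2 : ¬ Even (N2*p + s) := by
        simp only [Nat.even_add, Nat.even_mul]; tauto
      refine ⟨fun h => absurd h h1, fun _ h => absurd h h2, fun _ _ => ?_⟩
      rw [hUq, hUr, hu]
      have hc : (N1:ℤ) = (N2:ℤ) + 1 := by exact_mod_cast hN12
      rw [hc]; ring
    · have hpz : ¬ Even (p:ℤ) := by
        simpa [Int.even_coe_nat] using hp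
      rw [sum_E_odd hpz] at hUq hUr
      rw [E_mul] at hUq hUr
      by_cases hN : Even N1
      · have hN2 : ¬ Even N2 := by rw [hN12, Nat.even_add_one] at hN; exact hN
        have hNz : Even ((N1:ℤ)) := (Int.even_coe_nat _).mpr hN
        have hN2z : ¬ Even ((N2:ℤ)) := by simpa [Int.even_coe_nat] using hN2
        have hpz2 : ¬ (Even ((N2:ℤ)) ∨ Even ((p:ℤ))) := by tauto
        rw [if_pos hN, if_pos (Or.inl hNz)] at hUq
        rw [if_neg hN2, if_neg hpz2] at hUr
        by_cases hs : Even s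
        · have hveq := hv0 hp hs
          have hp' : Even (N1*p + s) := by simp only [Nat.even_add, Nat.even_mul]; tauto
          refine ⟨fun _ => ?_, fun h _ => absurd hp' h, fun h _ => absurd hp' h⟩
          rw [hUq, hveq]; ring
        · have huveq := huv0 hp hs
          have hp' : ¬ Even (N1*p + s) := by simp only [Nat.even_add, Nat.even_mul]; tauto
          have hs' : Even (N2*p + s) := by simp only [Nat.even_add, Nat.even_mul]; tauto
          refine ⟨fun h => absurd h hp', fun _ _ => ?_, fun _ h => absurd hs' h⟩
          rw [hUr]; linarith
      · have hN2 : Even N2 := by rw [hN12, Nat.even_add_one, not_not] at hN; exact hN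
        have hNz : ¬ Even ((N1:ℤ)) := by simpa [Int.even_coe_nat] using hN
        have hN2z : Even ((N2:ℤ)) := (Int.even_coe_nat _).mpr hN2
        have hpz1 : ¬ (Even ((N1:ℤ)) ∨ Even ((p:ℤ))) := by tauto
        rw [if_neg hN, if_neg hpz1] at hUq
        rw [if_pos hN2, if_pos (Or.inl hN2z)] at hUr
        by_cases hs : Even s
        · have hveq := hv0 hp hs
          have hp' : ¬ Even (N1*p + s) := by simp only [Nat.even_add, Nat.even_mul]; tauto
          have hs'' : Even (N2*p + s) := by simp only [Nat.even_add, Nat.even_mul]; tauto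
          refine ⟨fun h => absurd h hp', fun _ _ => ?_, fun _ h => absurd hs'' h⟩
          rw [hUr, hveq]; ring
        · have huveq := huv0 hp hs
          have hp' : Even (N1*p + s) := by simp only [Nat.even_add, Nat.even_mul]; tauto
          refine ⟨fun _ => ?_, fun h _ => absurd hp' h, fun h _ => absurd hp' h⟩
          rw [hUq]; linarith


def Inv (β : ℝ) (k : ℕ) : Prop :=
  0 < (ell β k).2 ∧ (ell β k).2 ≤ (ell β k).1 ∧
  (((ell β k).1 : ℝ) * β - ((bword β k).1.sum : ℕ) = DD β (k+1)) ∧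
  (((ell β k).2 : ℝ) * β - ((bword β k).2.sum : ℕ) = DD β (k+1) - DD β k) ∧
  (((bword β k).2.sum : ℤ) * ((ell β k).1 : ℕ) - ((bword β k).1.sum : ℤ) * ((ell β k).2 : ℕ) = 1) ∧
  (∀ j : ℕ, 1 ≤ j → j < (ell β k).1 →
      DD β k ≤ Int.fract ((j:ℝ) * β) ∧ Int.fract ((j:ℝ) * β) ≤ 1 - DD β k + DD β (k+1)) ∧
  (∀ j : ℕ, j < (ell β k).2 → Int.fract ((j:ℝ) * β) ≤ 1 - DD β k) ∧
  (Even (bword β k).1.sum → U β (ell β k).1 = 1) ∧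
  (¬ Even (bword β k).1.sum → Even (bword β k).2.sum → U β (ell β k).2 = 1) ∧
  (¬ Even (bword β k).1.sum → ¬ Even (bword β k).2.sum →
      U β (ell β k).1 - U β (ell β k).2 = 1)

lemma inv_all {β : ℝ} (h0 : 0 < β) (h1 : β < 1) (hirr : Irrational β) :
    ∀ k, Inv β k := by
  intro k
  induction k with
  | zero =>
    have e1 : (ell β 0).1 = 1 := rfl
    have e2 : (ell β 0).2 = 1 := rfl
    have f1 : (bword β 0).1.sum = 0 := rfl
    have f2 : (bword β 0).2.sum = 1 := rfl
    unfold Inv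
    rw [e1, e2, f1, f2]
    have hDD1 : DD β 1 = β := by rw [DD_succ, DD_zero, one_mul]; rfl
    refine ⟨Nat.one_pos, le_refl 1, by rw [hDD1]; norm_num, by rw [hDD1, DD_zero]; push_cast; ring,
      by norm_num, ?_, ?_, ?_, ?_, ?_⟩
    · intro j hj1 hj2; omega
    · intro j hj
      have : j = 0 := by omega
      subst this
      simp only [Nat.cast_zero, zero_mul, Int.fract_zero, DD_zero]
      norm_num
    · intro _; exact U_one β
    · intro h _; exact absurd Even.zero h
    · intro h _; exact absurd Even.zero h
  | succ k ih =>
    obtain ⟨hr0, hrq, hQ, hR, hDet, hA, hB, hu0, hv0, huv0⟩ := ih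
    obtain ⟨hbk0, hbk1, hbki⟩ := beta_props h0 h1 hirr k
    have hn2 := nd2 h0 h1 hirr k
    have hN1z : (((nDigit β k - 1).toNat : ℤ)) = nDigit β k - 1 := Int.toNat_of_nonneg (by omega)
    have hN2z : (((nDigit β k - 2).toNat : ℤ)) = nDigit β k - 2 := Int.toNat_of_nonneg (by omega)
    have hN1r : (((nDigit β k - 1).toNat : ℕ) : ℝ) = ((nDigit β k : ℤ):ℝ) - 1 := by
      exact_mod_cast hN1z
    have hN2r : (((nDigit β k - 2).toNat : ℕ) : ℝ) = ((nDigit β k : ℤ):ℝ) - 2 := by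
      exact_mod_cast hN2z
    have hN12 : (nDigit β k - 1).toNat = (nDigit β k - 2).toNat + 1 := by omega
    have hkey : (((nDigit β k : ℤ):ℝ) - 1) * DD β (k+1) < DD β k := by
      have h3 : ((nDigit β k : ℤ):ℝ) < 1 / betaSeq β k + 1 := Int.ceil_lt_add_one _
      have hmul : (((nDigit β k : ℤ):ℝ) - 1) * betaSeq β k < 1 := by
        have := mul_lt_mul_of_pos_right
          (show ((nDigit β k : ℤ):ℝ) - 1 < 1/betaSeq β k by linarith) hbk0
        rwa [one_div, inv_mul_cancel₀ (ne_of_gt hbk0)] at this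
      have hDp := DD_pos h0 h1 hirr k
      rw [DD_succ]
      nlinarith
    have hD2 := hD2gen h0 h1 hirr k
    have hstep := key_step β (DD β k) (DD β (k+1)) (DD β (k+2)) (ell β k).1 (ell β k).2
      (bword β k).1.sum (bword β k).2.sum (nDigit β k - 1).toNat (nDigit β k - 2).toNat
      ((nDigit β k : ℤ):ℝ)
      (DD_pos h0 h1 hirr k) (DD_le_one h0 h1 hirr k) (DD_pos h0 h1 hirr (k+1))
      (DD_antitone h0 h1 hirr k)
      hN1r hN2r hN12 hkey hD2 hr0 hrq hQ hR hDet hA hB hu0 hv0 huv0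
    obtain ⟨c1, c2, c3, c4, c5, c6, c7, c8, c9, c10⟩ := hstep
    have e1 : (ell β (k+1)).1 = (nDigit β k - 1).toNat * (ell β k).1 + (ell β k).2 := rfl
    have e2 : (ell β (k+1)).2 = (nDigit β k - 2).toNat * (ell β k).1 + (ell β k).2 := rfl
    have f1 := bsum1 (β := β) k
    have f2 := bsum2 (β := β) k
    unfold Inv
    rw [e1, e2, f1, f2]
    exact ⟨c1, c2, c3, c4, c5, c6, c7, c8, c9, c10⟩

end PPL

theorem parity_position_lemma
    (α : ℝ) (h0 : 0 < α) (h1 : α < 1/2) (hirr : Irrational α)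
    (k : ℕ) (hk : 1 ≤ k) :
    (eps (2*α) k = (0,1) ∨ eps (2*α) k = (1,0) ∨ eps (2*α) k = (1,1)) ∧
    (eps (2*α) k = (0,1) → sPos α (ell (2*α) k).1 = 1) ∧
    (eps (2*α) k = (1,0) → sPos α (ell (2*α) k).2 = 1) ∧
    (eps (2*α) k = (1,1) → sPos α (ell (2*α) k).1 - sPos α (ell (2*α) k).2 = 1) := by
  have h2b0 : 0 < 2*α := by linarith
  have h2b1 : 2*α < 1 := by linarith
  have h2birr : Irrational (2*α) := by
    have h := hirr.natCast_mul (m := 2) (by norm_num)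
    simpa using h
  obtain ⟨hr0, hrq, hQ, hR, hDet, hA, hB, hu0, hv0, huv0⟩ := PPL.inv_all h2b0 h2b1 h2birr k
  have hsPos : ∀ ℓ : ℕ, sPos α ℓ = PPL.U (2*α) ℓ := by
    intro ℓ
    unfold sPos PPL.U
    exact Finset.sum_congr rfl fun j _ => PPL.phi_eq α j
  set p := (bword (2*α) k).1.sum with hp_def
  set s := (bword (2*α) k).2.sum with hs_def
  have heps : eps (2*α) k = (p % 2, s % 2) := rfl
  have hnotboth : ¬ (Even p ∧ Even s) := by
    rintro ⟨hp, hs⟩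
    have hp2 : Even ((p:ℤ)) := by exact_mod_cast hp
    have hs2 : Even ((s:ℤ)) := by exact_mod_cast hs
    have h1 : Even ((s:ℤ)*((ell (2*α) k).1 : ℕ) - (p:ℤ)*((ell (2*α) k).2 : ℕ)) :=
      (hs2.mul_right _).sub (hp2.mul_right _)
    rw [hDet] at h1
    norm_num at h1
  have hcases : (p % 2 = 0 ∧ s % 2 = 1) ∨ (p % 2 = 1 ∧ s % 2 = 0) ∨ (p % 2 = 1 ∧ s % 2 = 1) := by
    rcases Nat.even_or_odd p with hp | hp <;> rcases Nat.even_or_odd s with hs | hs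
    · exact absurd ⟨hp, hs⟩ hnotboth
    · exact Or.inl ⟨Nat.even_iff.mp hp, Nat.odd_iff.mp hs⟩
    · exact Or.inr (Or.inl ⟨Nat.odd_iff.mp hp, Nat.even_iff.mp hs⟩)
    · exact Or.inr (Or.inr ⟨Nat.odd_iff.mp hp, Nat.odd_iff.mp hs⟩)
  refine ⟨?_, ?_, ?_, ?_⟩
  · rw [heps]
    rcases hcases with ⟨h1, h2⟩ | ⟨h1, h2⟩ | ⟨h1, h2⟩
    · exact Or.inl (by rw [h1, h2])
    · exact Or.inr (Or.inl (by rw [h1, h2]))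
    · exact Or.inr (Or.inr (by rw [h1, h2]))
  · intro h
    rw [heps, Prod.mk.injEq] at h
    have hp : Even p := Nat.even_iff.mpr h.1
    rw [hsPos]
    exact hu0 hp
  · intro h
    rw [heps, Prod.mk.injEq] at h
    have hp : ¬ Even p := by rw [Nat.even_iff, h.1]; norm_num
    have hs : Even s := Nat.even_iff.mpr h.2
    rw [hsPos]
    exact hv0 hp hs
  · intro h
    rw [heps, Prod.mk.injEq] at h
    have hp : ¬ Even p := by rw [Nat.even_iff, h.1]; norm_num
    have hs : ¬ Even s := by rw [Nat.even_iff, h.2]; norm_num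
    rw [hsPos, hsPos]
    exact huv0 hp hs
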